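/- arXiv:1910.06665 — 6 statements merged into one kernel-verified Lean document; each statement's English description precedes it below -/
import Mathlib

section
/- Let M = (E,*,cx) be a reduced oriented matroid and let C be a circuit of M. Then for any x ∈ C, the set (C \ {x}) ∪ {x*} contains no circuit of M. -/
/-- An oriented matroid: a ground set `E` with a fixed-point-free involution `star`
and a finitary closure operator `cx` satisfying axioms (M4)-(M6). -/
structure OMatroid (E : Type*) where
  star : E → E
  cx : Set E → Set E
  star_star : ∀ x, star (star x) = x
  star_ne : ∀ x, star x ≠ x
  subset_cx : ∀ A : Set E, A ⊆ cx A
  cx_mono : ∀ ⦃A B : Set E⦄, A ⊆ B → cx A ⊆ cx B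
  cx_cx : ∀ A : Set E, cx (cx A) = cx A
  finitary : ∀ (A : Set E) (x : E), x ∈ cx A → ∃ B ⊆ A, B.Finite ∧ x ∈ cx B
  cx_star : ∀ A : Set E, cx (star '' A) = star '' cx A
  M5 : ∀ (A : Set E) (x : E), x ∈ cx (A ∪ {star x}) → x ∈ cx A
  M6 : ∀ (A : Set E) (x y : E), x ∈ cx (A ∪ {star y}) → x ∉ cx A →
        y ∈ cx ((A \ {y}) ∪ {star x})

namespace OMatroid

variable {E : Type*} (M : OMatroid E)

/-- A circuit: a minimal nonempty subset `C` with `C* ⊆ cx C`. -/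
def IsCircuit (C : Set E) : Prop :=
  C.Nonempty ∧ M.star '' C ⊆ M.cx C ∧
    ∀ D ⊆ C, D.Nonempty → M.star '' D ⊆ M.cx D → D = C

/-- The set of loops. -/
def loops : Set E := M.cx ∅

def IsClosed (F : Set E) : Prop := M.cx F = F

/-- A sharp: a closed set `F` with `F ∩ F* = L`. -/
def IsSharp (F : Set E) : Prop := M.IsClosed F ∧ F ∩ M.star '' F = M.loops

/-- A hemispace: a closed set `H` with `H ∪ H* = E` and `H ∩ H* = L`. -/
def IsHemispace (H : Set E) : Prop :=
  M.IsClosed H ∧ H ∪ M.star '' H = Set.univ ∧ H ∩ M.star '' H = M.loops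

end OMatroid

/-- In a reduced oriented matroid, if `C` is a circuit and `x ∈ C`,
then `(C \ {x}) ∪ {x*}` contains no circuit. -/
theorem stmt_0 {E : Type*} (M : OMatroid E) (hred : M.cx ∅ = ∅)
    (C : Set E) (hC : M.IsCircuit C) (x : E) (hx : x ∈ C) :
    ∀ D ⊆ (C \ {x}) ∪ {M.star x}, ¬ M.IsCircuit D := by

  intro D hD hDc
  obtain ⟨hCne, hCstar, hCmin⟩ := hC
  obtain ⟨hDne, hDstar, hDmin⟩ := hDc
  -- key: x ∉ cx (C \ {x})
  have hkey : x ∉ M.cx (C \ {x}) := by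
    intro hxcl
    set A := C \ {x} with hA
    have hCsub : C ⊆ M.cx A := by
      intro y hy
      by_cases hyx : y = x
      · exact hyx ▸ hxcl
      · exact M.subset_cx A ⟨hy, hyx⟩
    have hcxA : M.cx C ⊆ M.cx A := by
      have := M.cx_mono hCsub
      rwa [M.cx_cx] at this
    have hAstar : M.star '' A ⊆ M.cx A := by
      intro z hz
      obtain ⟨a, ha, rfl⟩ := hz
      exact hcxA (hCstar ⟨a, ha.1, rfl⟩)
    have hAne : A.Nonempty := by
      rcases Set.eq_empty_or_nonempty A with h | h
      · exfalso
        rw [h, hred] at hxcl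
        exact hxcl
      · exact h
    have := hCmin A (Set.diff_subset) hAne hAstar
    have : x ∈ A := this ▸ hx
    exact this.2 rfl
  by_cases hsx : M.star x ∈ D
  · -- x ∈ cx D ⊆ cx ((C\{x}) ∪ {x*}), then M5
    have hx' : x ∈ M.cx D := by
      have : x ∈ M.star '' D := ⟨M.star x, hsx, M.star_star x⟩
      exact hDstar this
    have : x ∈ M.cx ((C \ {x}) ∪ {M.star x}) := M.cx_mono hD hx'
    exact hkey (M.M5 _ x this)
  · -- D ⊆ C \ {x}
    have hDsub : D ⊆ C := by
      intro y hy
      rcases hD hy with h | h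
      · exact h.1
      · exact absurd (h ▸ hy) hsx
    have heq := hCmin D hDsub hDne hDstar
    rw [heq] at hsx
    rcases hD (heq ▸ hx : x ∈ D) with h | h
    · exact h.2 rfl
    · exact M.star_ne x h.symm
end

section
/- Let M = (E,*,cx) be an oriented matroid with set of hemispaces 𝔥. For any hemispace H and any X ⊆ H, the closure cx(X) (which is contained in H) equals the intersection of all hemispaces K ∈ 𝔥 with K ⊇ X. -/
namespace OMatroid

variable {E : Type*} (M : OMatroid E)

lemma star_mem_image {A : Set E} {z : E} : z ∈ M.star '' A ↔ M.star z ∈ A := by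
  constructor
  · rintro ⟨b, hb, rfl⟩; rwa [M.star_star]
  · intro h; exact ⟨M.star z, h, M.star_star z⟩

lemma star_loops : M.star '' M.loops = M.loops := by
  rw [loops, ← M.cx_star, Set.image_empty]

lemma loops_subset_cx (A : Set E) : M.loops ⊆ M.cx A :=
  M.cx_mono (Set.empty_subset A)

lemma sharp_insert {G : Set E} {y : E} (hG : M.IsSharp G) (hy : M.star y ∉ G) :
    M.IsSharp (M.cx (G ∪ {y})) := by
  obtain ⟨hGc, hGs⟩ := hG
  refine ⟨M.cx_cx _, subset_antisymm ?_ ?_⟩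
  · rintro a ⟨haG', hsa⟩
    have hsaG' : M.star a ∈ M.cx (G ∪ {y}) := (M.star_mem_image).mp hsa
    by_cases hsaG : M.star a ∈ G
    · by_cases haG : a ∈ G
      · exact hGs ▸ ⟨haG, (M.star_mem_image).mpr hsaG⟩
      · -- a ∉ G, star a ∈ G : M6 gives star y ∈ G, contradiction
        have h1 : a ∈ M.cx (G ∪ {M.star (M.star y)}) := by rwa [M.star_star]
        have h2 : a ∉ M.cx G := by rwa [hGc]
        have h3 := M.M6 G a (M.star y) h1 h2
        have hsub : (G \ {M.star y}) ∪ {M.star a} ⊆ G := by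
          rintro z (⟨hz, _⟩ | hz)
          · exact hz
          · simp only [Set.mem_singleton_iff] at hz; subst hz; exact hsaG
        have := M.cx_mono hsub h3
        rw [hGc] at this
        exact absurd this hy
    · -- star a ∉ G
      have h1 : M.star a ∈ M.cx (G ∪ {M.star (M.star y)}) := by rwa [M.star_star]
      have h2 : M.star a ∉ M.cx G := by rwa [hGc]
      have h3 := M.M6 G (M.star a) (M.star y) h1 h2
      rw [M.star_star] at h3
      have hsub : (G \ {M.star y}) ∪ {a} ⊆ M.cx (G ∪ {y}) := by
        rintro z (⟨hz, _⟩ | hz)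
        · exact M.subset_cx _ (Or.inl hz)
        · simp only [Set.mem_singleton_iff] at hz; subst hz; exact haG'
      have h4 : M.star y ∈ M.cx (M.cx (G ∪ {y})) := M.cx_mono hsub h3
      rw [M.cx_cx] at h4
      have h5 : M.star y ∈ M.cx (G ∪ {M.star (M.star y)}) := by rwa [M.star_star]
      have h6 := M.M5 G (M.star y) h5
      rw [hGc] at h6
      exact absurd h6 hy
  · intro a ha
    refine ⟨M.loops_subset_cx _ ha, (M.star_mem_image).mpr ?_⟩
    have : M.star a ∈ M.star '' M.loops := ⟨a, ha, rfl⟩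
    rw [M.star_loops] at this
    exact M.loops_subset_cx _ this

lemma chain_finite_subset {c : Set (Set E)} (hc : IsChain (· ⊆ ·) c) (hne : c.Nonempty)
    {B : Set E} (hB : B.Finite) (hsub : B ⊆ ⋃₀ c) : ∃ t ∈ c, B ⊆ t := by
  revert hsub
  refine Set.Finite.induction_on (motive := fun B _ => B ⊆ ⋃₀ c → ∃ t ∈ c, B ⊆ t) B hB ?_ ?_
  · intro _
    obtain ⟨t, ht⟩ := hne
    exact ⟨t, ht, Set.empty_subset t⟩
  · intro a s _ _ ih hsub
    obtain ⟨t₁, ht₁, hat₁⟩ := hsub (Set.mem_insert a s)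
    obtain ⟨t₂, ht₂, hst₂⟩ := ih (fun z hz => hsub (Set.mem_insert_of_mem a hz))
    rcases hc.total ht₁ ht₂ with h | h
    · exact ⟨t₂, ht₂, Set.insert_subset (h hat₁) hst₂⟩
    · exact ⟨t₁, ht₁, Set.insert_subset hat₁ (hst₂.trans h)⟩

lemma sharp_subset_hemispace {F : Set E} (hF : M.IsSharp F) :
    ∃ K, M.IsHemispace K ∧ F ⊆ K := by
  set S : Set (Set E) := {G | M.IsSharp G ∧ F ⊆ G} with hS
  have hzorn : ∀ c ⊆ S, IsChain (· ⊆ ·) c → c.Nonempty →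
      ∃ ub ∈ S, ∀ s ∈ c, s ⊆ ub := by
    intro c hcS hchain hcne
    refine ⟨⋃₀ c, ⟨⟨?_, ?_⟩, ?_⟩, fun s hs => Set.subset_sUnion_of_mem hs⟩
    · -- closed
      refine subset_antisymm ?_ (M.subset_cx _)
      intro z hz
      obtain ⟨B, hBsub, hBfin, hzB⟩ := M.finitary _ z hz
      obtain ⟨t, htc, hBt⟩ := chain_finite_subset hchain hcne hBfin hBsub
      have : z ∈ M.cx t := M.cx_mono hBt hzB
      rw [(hcS htc).1.1] at this
      exact ⟨t, htc, this⟩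
    · -- sharp intersection
      refine subset_antisymm ?_ ?_
      · rintro z ⟨⟨t₁, ht₁, hzt₁⟩, hzs⟩
        obtain ⟨t₂, ht₂, hzt₂⟩ := (M.star_mem_image).mp hzs
        have hzt₂' : M.star z ∈ t₂ := hzt₂
        rcases hchain.total ht₁ ht₂ with h | h
        · exact (hcS ht₂).1.2 ▸ ⟨h hzt₁, (M.star_mem_image).mpr hzt₂'⟩
        · exact (hcS ht₁).1.2 ▸ ⟨hzt₁, (M.star_mem_image).mpr (h hzt₂')⟩
      · intro z hz
        obtain ⟨t, htc⟩ := hcne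
        have hlt : M.loops ⊆ t := by
          rw [← (hcS htc).1.2]; exact Set.inter_subset_left
        have hz' : M.star z ∈ M.loops := by
          rw [← M.star_loops]; exact ⟨z, hz, rfl⟩
        exact ⟨⟨t, htc, hlt hz⟩, (M.star_mem_image).mpr ⟨t, htc, hlt hz'⟩⟩
    · obtain ⟨t, htc⟩ := hcne
      exact (hcS htc).2.trans (Set.subset_sUnion_of_mem htc)
  obtain ⟨m, hFm, hmax⟩ := zorn_subset_nonempty S hzorn F ⟨hF, subset_rfl⟩
  obtain ⟨⟨hmc, hms⟩, _⟩ := hmax.prop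
  refine ⟨m, ⟨hmc, ?_, hms⟩, hFm⟩
  · refine subset_antisymm (Set.subset_univ _) ?_
    intro z _
    by_cases hsz : M.star z ∈ m
    · exact Or.inr ((M.star_mem_image).mpr hsz)
    · left
      have hsharp : M.IsSharp (M.cx (m ∪ {z})) := M.sharp_insert ⟨hmc, hms⟩ hsz
      have hmem : M.cx (m ∪ {z}) ∈ S :=
        ⟨hsharp, hFm.trans ((Set.subset_union_left).trans (M.subset_cx _))⟩
      have hle : m ⊆ M.cx (m ∪ {z}) := (Set.subset_union_left).trans (M.subset_cx _)
      have := hmax.2 hmem hle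
      exact this (M.subset_cx _ (Or.inr rfl))

end OMatroid

/-- For a hemispace `H` of an oriented matroid and `X ⊆ H`, the closure
`cx X` is contained in `H` and equals the intersection of all hemispaces containing `X`. -/
theorem stmt_1 {E : Type*} (M : OMatroid E) (H : Set E) (hH : M.IsHemispace H)
    (X : Set E) (hX : X ⊆ H) :
    M.cx X ⊆ H ∧ M.cx X = ⋂₀ {K | M.IsHemispace K ∧ X ⊆ K} := by
  have hsub : M.cx X ⊆ H := by
    have := M.cx_mono hX
    rwa [hH.1] at this
  refine ⟨hsub, subset_antisymm ?_ ?_⟩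
  · intro z hz
    rw [Set.mem_sInter]
    rintro K ⟨hK, hXK⟩
    have := M.cx_mono hXK hz
    rwa [hK.1] at this
  · intro z hz
    by_contra hzc
    have hFsharp : M.IsSharp (M.cx X) := by
      refine ⟨M.cx_cx X, subset_antisymm ?_ ?_⟩
      · rintro a ⟨ha, hsa⟩
        have h1 : a ∈ H := hsub ha
        have h2 : M.star a ∈ H := hsub ((M.star_mem_image).mp hsa)
        exact hH.2.2 ▸ ⟨h1, (M.star_mem_image).mpr h2⟩
      · intro a ha
        refine ⟨M.loops_subset_cx _ ha, (M.star_mem_image).mpr ?_⟩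
        have : M.star a ∈ M.loops := by rw [← M.star_loops]; exact ⟨a, ha, rfl⟩
        exact M.loops_subset_cx _ this
    have hnz : M.star (M.star z) ∉ M.cx X := by rwa [M.star_star]
    have hF'sharp : M.IsSharp (M.cx (M.cx X ∪ {M.star z})) :=
      M.sharp_insert hFsharp hnz
    obtain ⟨K, hK, hFK⟩ := M.sharp_subset_hemispace hF'sharp
    have hXK : X ⊆ K :=
      (M.subset_cx X).trans ((Set.subset_union_left).trans ((M.subset_cx _).trans hFK))
    have hzK : z ∈ K := by
      rw [Set.mem_sInter] at hz
      exact hz K ⟨hK, hXK⟩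
    have hszK : M.star z ∈ K := hFK (M.subset_cx _ (Or.inr rfl))
    have : z ∈ M.loops := hK.2.2 ▸ ⟨hzK, (M.star_mem_image).mpr hszK⟩
    exact hzc (M.loops_subset_cx X this)
end

section
/- Let M = (E,*,cx) be an oriented matroid, F ⊆ E with F = F*, and let L = cx(∅). For A ⊆ F the following are equivalent: (i) F = A ∪ A*, A ∩ A* = L ∩ F, and cx(A) ∩ F = A (A is a hemispace of the restriction of M to F); (ii) F = A ∪ A*, L ∩ F ⊆ A, and no circuit of M is contained in A \ L; (iii) A = H ∩ F for some hemispace H of M; (iv) A ∪ A* = F, cx(A) is a sharp of M, and L ∩ F ⊆ A. -/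
lemma directed_sUnion_finite {α : Type*} : ∀ (n : ℕ) {c : Set (Set α)},
    DirectedOn (· ⊆ ·) c → ∀ {t₀ : Set α}, t₀ ∈ c → ∀ (B : Set α), B.Finite →
    B.ncard ≤ n → B ⊆ ⋃₀ c → ∃ t ∈ c, B ⊆ t := by
  intro n
  induction n with
  | zero =>
    intro c _ t₀ ht₀ B hBf hcard _
    rw [(Set.ncard_eq_zero hBf).mp (Nat.le_zero.mp hcard)]
    exact ⟨t₀, ht₀, Set.empty_subset _⟩
  | succ n ih =>
    intro c hdir t₀ ht₀ B hBf hcard hBc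
    rcases Set.eq_empty_or_nonempty B with rfl | ⟨a, haB⟩
    · exact ⟨t₀, ht₀, Set.empty_subset _⟩
    · have hcard' : (B \ {a}).ncard ≤ n := by
        have := Set.ncard_diff_singleton_lt_of_mem haB hBf
        omega
      obtain ⟨t₁, ht₁, hst₁⟩ := ih hdir ht₀ (B \ {a}) (hBf.diff) hcard'
        (Set.diff_subset.trans hBc)
      obtain ⟨t₂, ht₂, hat₂⟩ := hBc haB
      obtain ⟨t₃, ht₃, h13, h23⟩ := hdir t₁ ht₁ t₂ ht₂
      refine ⟨t₃, ht₃, fun w hw => ?_⟩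
      by_cases hwa : w = a
      · exact h23 (hwa ▸ hat₂)
      · exact h13 (hst₁ ⟨hw, hwa⟩)


namespace OMatroid

variable {E : Type*} (M : OMatroid E)

lemma mem_star_image {A : Set E} {x : E} : x ∈ M.star '' A ↔ M.star x ∈ A := by
  constructor
  · rintro ⟨a, ha, rfl⟩; rwa [M.star_star]
  · intro h; exact ⟨M.star x, h, M.star_star x⟩

lemma cx_le {A B : Set E} (h : A ⊆ M.cx B) : M.cx A ⊆ M.cx B := by
  intro x hx
  have := M.cx_mono h hx
  rwa [M.cx_cx] at this

lemma exists_selfstar_subset : ∀ (n : ℕ) (B : Set E), B.Finite → B.ncard ≤ n →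
    (∀ b ∈ B, b ∉ M.loops) → (∃ y, y ∉ M.loops ∧ y ∈ M.cx B ∧ M.star y ∈ M.cx B) →
    ∃ D ⊆ B, D.Nonempty ∧ M.star '' D ⊆ M.cx D := by
  intro n
  induction n with
  | zero =>
    rintro B hfin hcard _ ⟨y, hyL, hy, -⟩
    have hB : B = ∅ := (Set.ncard_eq_zero hfin).mp (Nat.le_zero.mp hcard)
    subst hB
    exact absurd hy hyL
  | succ n ih =>
    rintro B hfin hcard hBL ⟨y, hyL, hy, hy'⟩
    by_cases hall : ∀ b ∈ B, M.star b ∈ M.cx B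
    · refine ⟨B, subset_rfl, ?_, ?_⟩
      · rcases Set.eq_empty_or_nonempty B with rfl | h
        · exact absurd hy hyL
        · exact h
      · rintro _ ⟨b, hb, rfl⟩; exact hall b hb
    · push_neg at hall
      obtain ⟨b, hbB, hbstar⟩ := hall
      set B' := B \ {b} with hB'
      have hBeq : B' ∪ {b} = B := by
        rw [hB', Set.diff_union_self]
        exact Set.union_eq_self_of_subset_right (Set.singleton_subset_iff.mpr hbB)
      have hsubB : B' ⊆ B := Set.diff_subset
      have key : ∀ z, z ∈ M.cx B → M.star z ∈ M.cx B → z ∉ M.cx B' → False := by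
        intro z hz hz' hnot
        have h1 : z ∈ M.cx (B' ∪ {M.star (M.star b)}) := by
          rw [M.star_star, hBeq]; exact hz
        have h2 := M.M6 B' z (M.star b) h1 hnot
        apply hbstar
        refine M.cx_le ?_ h2
        intro w hw
        rcases hw with hw | hw
        · exact M.subset_cx B (hsubB hw.1)
        · rw [Set.mem_singleton_iff.mp hw]; exact hz'
      have hyB' : y ∈ M.cx B' := by
        by_contra hnot; exact key y hy hy' hnot
      have hy'B' : M.star y ∈ M.cx B' := by
        by_contra hnot
        refine key (M.star y) hy' ?_ hnot
        rw [M.star_star]; exact hy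
      have hcard' : B'.ncard ≤ n := by
        rw [hB']
        have := Set.ncard_diff_singleton_lt_of_mem hbB hfin
        omega
      obtain ⟨D, hD, h1, h2⟩ := ih B' (hfin.diff) hcard'
        (fun c hc => hBL c (hsubB hc)) ⟨y, hyL, hyB', hy'B'⟩
      exact ⟨D, hD.trans hsubB, h1, h2⟩

lemma exists_circuit_subset : ∀ (n : ℕ) (D : Set E), D.Finite → D.ncard ≤ n →
    D.Nonempty → M.star '' D ⊆ M.cx D → ∃ C ⊆ D, M.IsCircuit C := by
  intro n
  induction n with
  | zero =>
    intro D hfin hcard hne _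
    rw [(Set.ncard_eq_zero hfin).mp (Nat.le_zero.mp hcard)] at hne
    exact absurd hne (Set.not_nonempty_empty)
  | succ n ih =>
    intro D hfin hcard hne hDs
    by_cases h : ∀ D' ⊆ D, D'.Nonempty → M.star '' D' ⊆ M.cx D' → D' = D
    · exact ⟨D, subset_rfl, hne, hDs, h⟩
    · push_neg at h
      obtain ⟨D', hsub, hne', hDs', hneq⟩ := h
      have hlt : D'.ncard ≤ n := by
        have := Set.ncard_lt_ncard (ssubset_of_subset_of_ne hsub hneq) hfin
        omega
      obtain ⟨C, hC, hcirc⟩ := ih D' (hfin.subset hsub) hlt hne' hDs'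
      exact ⟨C, hC.trans hsub, hcirc⟩

lemma exists_circuit {A : Set E} {x : E} (hxL : x ∉ M.loops)
    (hx : x ∈ M.cx A) (hx' : M.star x ∈ M.cx A) :
    ∃ C ⊆ A \ M.loops, M.IsCircuit C := by
  obtain ⟨B₁, hB₁A, hB₁f, hxB₁⟩ := M.finitary A x hx
  obtain ⟨B₂, hB₂A, hB₂f, hxB₂⟩ := M.finitary A (M.star x) hx'
  set B := (B₁ ∪ B₂) \ M.loops with hB
  have hBfin : B.Finite := (hB₁f.union hB₂f).diff
  have hBA : B ⊆ A \ M.loops := fun z hz => ⟨Set.union_subset hB₁A hB₂A hz.1, hz.2⟩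
  have hBcx : B₁ ∪ B₂ ⊆ M.cx B := by
    intro z hz
    by_cases hzL : z ∈ M.loops
    · exact M.loops_subset_cx B hzL
    · exact M.subset_cx B ⟨hz, hzL⟩
  have hxB : x ∈ M.cx B := M.cx_le hBcx (M.cx_mono Set.subset_union_left hxB₁)
  have hx'B : M.star x ∈ M.cx B := M.cx_le hBcx (M.cx_mono Set.subset_union_right hxB₂)
  obtain ⟨D, hDB, hDne, hDs⟩ := M.exists_selfstar_subset B.ncard B hBfin le_rfl
    (fun b hb => hb.2) ⟨x, hxL, hxB, hx'B⟩
  obtain ⟨C, hCD, hcirc⟩ := M.exists_circuit_subset D.ncard D (hBfin.subset hDB) le_rfl hDne hDs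
  exact ⟨C, (hCD.trans hDB).trans hBA, hcirc⟩

lemma exists_hemispace_superset {S : Set E} (hS : M.IsSharp S) :
    ∃ H, M.IsHemispace H ∧ S ⊆ H := by
  classical
  set coll := {T : Set E | M.IsSharp T ∧ S ⊆ T} with hcoll
  have hchainub : ∀ c ⊆ coll, IsChain (· ⊆ ·) c → c.Nonempty →
      ∃ ub ∈ coll, ∀ s ∈ c, s ⊆ ub := by
    rintro c hc hchain ⟨t₀, ht₀⟩
    have hdir := hchain.directedOn
    refine ⟨⋃₀ c, ⟨⟨?_, ?_⟩, (hc ht₀).2.trans (Set.subset_sUnion_of_mem ht₀)⟩,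
      fun s hs => Set.subset_sUnion_of_mem hs⟩
    · -- closed
      refine subset_antisymm ?_ (M.subset_cx _)
      intro z hz
      obtain ⟨B, hBc, hBf, hzB⟩ := M.finitary _ z hz
      obtain ⟨t, htc, hBt⟩ := directed_sUnion_finite B.ncard hdir ht₀ B hBf le_rfl hBc
      have hzt : z ∈ M.cx t := M.cx_mono hBt hzB
      rw [(hc htc).1.1] at hzt
      exact Set.subset_sUnion_of_mem htc hzt
    · apply subset_antisymm
      · rintro z ⟨hz1, hz2⟩
        rw [M.mem_star_image] at hz2
        obtain ⟨t₁, ht₁, hzt₁⟩ := hz1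
        obtain ⟨t₂, ht₂, hzt₂⟩ := hz2
        obtain ⟨t₃, ht₃, h13, h23⟩ := hdir t₁ ht₁ t₂ ht₂
        have := (hc ht₃).1.2
        rw [← this]
        exact ⟨h13 hzt₁, M.mem_star_image.mpr (h23 hzt₂)⟩
      · intro z hz
        have hLt₀ : M.loops ⊆ t₀ := by
          rw [← (hc ht₀).1.2]; exact Set.inter_subset_left
        refine ⟨Set.subset_sUnion_of_mem ht₀ (hLt₀ hz), ?_⟩
        rw [M.mem_star_image]
        have : M.star z ∈ M.loops := by
          rw [← M.star_loops]; exact ⟨z, hz, rfl⟩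
        exact Set.subset_sUnion_of_mem ht₀ (hLt₀ this)
  obtain ⟨F₁, hSF₁, hF₁coll, hmax⟩ := zorn_subset_nonempty coll hchainub S ⟨hS, subset_rfl⟩
  obtain ⟨⟨hF₁closed, hF₁sharp⟩, hSF₁'⟩ := hF₁coll
  by_cases hH : F₁ ∪ M.star '' F₁ = Set.univ
  · exact ⟨F₁, ⟨hF₁closed, hH, hF₁sharp⟩, hSF₁⟩
  · exfalso
    obtain ⟨x, hx⟩ := Set.ne_univ_iff_exists_notMem _ |>.mp hH
    have hx1 : x ∉ F₁ := fun h => hx (Or.inl h)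
    have hx2 : M.star x ∉ F₁ := fun h => hx (Or.inr (M.mem_star_image.mpr h))
    set G := M.cx (F₁ ∪ {x}) with hG
    have hF₁G : F₁ ⊆ G := fun z hz => M.subset_cx _ (Or.inl hz)
    have hxG : x ∈ G := M.subset_cx _ (Or.inr rfl)
    have step : ∀ z, z ∈ G → z ∉ F₁ → M.star x ∈ M.cx (F₁ ∪ {M.star z}) := by
      intro z hz hzF
      have h1 : z ∈ M.cx (F₁ ∪ {M.star (M.star x)}) := by rw [M.star_star]; exact hz
      have h2 : z ∉ M.cx F₁ := by rw [hF₁closed]; exact hzF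
      have h3 := M.M6 F₁ z (M.star x) h1 h2
      rwa [Set.diff_singleton_eq_self hx2] at h3
    have hGsharp : M.IsSharp G := by
      refine ⟨M.cx_cx _, subset_antisymm ?_ ?_⟩
      · rintro z ⟨hz1, hz2⟩
        have hz2' : M.star z ∈ G := M.mem_star_image.mp hz2
        by_contra hzL
        by_cases hzF : z ∈ F₁
        · by_cases hz'F : M.star z ∈ F₁
          · exact hzL (hF₁sharp ▸ ⟨hzF, M.mem_star_image.mpr hz'F⟩)
          · have h := step (M.star z) hz2' hz'F
            rw [M.star_star, Set.union_singleton, Set.insert_eq_self.mpr hzF,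
              hF₁closed] at h
            exact hx2 h
        · by_cases hz'F : M.star z ∈ F₁
          · have h := step z hz1 hzF
            rw [Set.union_singleton, Set.insert_eq_self.mpr hz'F, hF₁closed] at h
            exact hx2 h
          · have h1 := step (M.star z) hz2' hz'F
            rw [M.star_star] at h1
            have h2 : M.star x ∈ G := by
              refine M.cx_le ?_ h1
              intro w hw
              rcases hw with hw | hw
              · exact hF₁G hw
              · rw [Set.mem_singleton_iff.mp hw]; exact hz1
            have h3 : M.star x ∈ M.cx (F₁ ∪ {M.star (M.star x)}) := by
              rw [M.star_star]; exact h2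
            have h4 := M.M5 F₁ (M.star x) h3
            rw [hF₁closed] at h4
            exact hx2 h4
      · intro z hz
        refine ⟨M.loops_subset_cx _ hz, ?_⟩
        rw [M.mem_star_image]
        refine M.loops_subset_cx _ ?_
        rw [← M.star_loops]
        exact ⟨z, hz, rfl⟩
    have hGcoll : G ∈ coll := ⟨hGsharp, hSF₁'.trans hF₁G⟩
    have := hmax hGcoll hF₁G
    exact hx1 (this hxG)


end OMatroid

/-- characterization of the hemispaces of the restriction of an oriented
matroid `M` to a `*`-stable subset `F`. -/
theorem stmt_3 {E : Type*} (M : OMatroid E) (F : Set E) (hF : M.star '' F = F)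
    (A : Set E) (hA : A ⊆ F) :
    List.TFAE
      [ F = A ∪ M.star '' A ∧ A ∩ M.star '' A = M.loops ∩ F ∧ M.cx A ∩ F = A,
        F = A ∪ M.star '' A ∧ M.loops ∩ F ⊆ A ∧
          ∀ C ⊆ A \ M.loops, ¬ M.IsCircuit C,
        ∃ H : Set E, M.IsHemispace H ∧ A = H ∩ F,
        A ∪ M.star '' A = F ∧ M.IsSharp (M.cx A) ∧ M.loops ∩ F ⊆ A ] := by
  have hFst : ∀ z, z ∈ F → M.star z ∈ F := fun z hz => by
    rw [← hF]; exact ⟨z, hz, rfl⟩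
  have hFst' : ∀ z, M.star z ∈ F → z ∈ F := fun z hz => by
    have := hFst _ hz; rwa [M.star_star] at this
  tfae_have 1 → 2 := by
    rintro ⟨h1, h2, h3⟩
    refine ⟨h1, ?_, ?_⟩
    · intro z hz
      rw [← h3]; exact ⟨M.loops_subset_cx A hz.1, hz.2⟩
    · rintro C hC ⟨⟨c, hc⟩, hCs, -⟩
      have hcA : c ∈ A := (hC hc).1
      have hcL : c ∉ M.loops := (hC hc).2
      have h4 : M.star c ∈ M.cx A :=
        M.cx_mono (fun w hw => (hC hw).1) (hCs ⟨c, hc, rfl⟩)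
      have h5 : M.star c ∈ A := by
        rw [← h3]; exact ⟨h4, hFst c (hA hcA)⟩
      have h6 : c ∈ M.loops ∩ F := h2 ▸ ⟨hcA, M.mem_star_image.mpr h5⟩
      exact hcL h6.1
  tfae_have 2 → 4 := by
    rintro ⟨h1, h2, h3⟩
    refine ⟨h1.symm, ⟨M.cx_cx A, subset_antisymm ?_ ?_⟩, h2⟩
    · rintro z ⟨hz1, hz2⟩
      by_contra hzL
      obtain ⟨C, hC, hcirc⟩ := M.exists_circuit hzL hz1 (M.mem_star_image.mp hz2)
      exact h3 C hC hcirc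
    · intro z hz
      refine ⟨M.loops_subset_cx A hz, M.mem_star_image.mpr (M.loops_subset_cx A ?_)⟩
      rw [← M.star_loops]; exact ⟨z, hz, rfl⟩
  tfae_have 4 → 3 := by
    rintro ⟨h1, h2, h3⟩
    obtain ⟨H, hH, hsub⟩ := M.exists_hemispace_superset h2
    refine ⟨H, hH, subset_antisymm ?_ ?_⟩
    · intro a ha; exact ⟨hsub (M.subset_cx A ha), hA ha⟩
    · rintro z ⟨hzH, hzF⟩
      have hzF' := hzF
      rw [← h1] at hzF'
      rcases hzF' with hz | hz
      · exact hz
      · have hsz : M.star z ∈ A := M.mem_star_image.mp hz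
        have hzH' : z ∈ M.star '' H := M.mem_star_image.mpr (hsub (M.subset_cx A hsz))
        have hzL : z ∈ M.loops := hH.2.2 ▸ ⟨hzH, hzH'⟩
        exact h3 ⟨hzL, hzF⟩
  tfae_have 3 → 1 := by
    rintro ⟨H, ⟨hHc, hHu, hHi⟩, rfl⟩
    refine ⟨?_, ?_, ?_⟩
    · apply subset_antisymm
      · intro z hzF
        have hz : z ∈ H ∪ M.star '' H := by rw [hHu]; trivial
        rcases hz with hz | hz
        · exact Or.inl ⟨hz, hzF⟩
        · exact Or.inr (M.mem_star_image.mpr ⟨M.mem_star_image.mp hz, hFst z hzF⟩)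
      · rintro z (hz | hz)
        · exact hz.2
        · exact hFst' z (M.mem_star_image.mp hz).2
    · apply subset_antisymm
      · rintro z ⟨⟨hzH, hzF⟩, hz2⟩
        have h := M.mem_star_image.mp hz2
        exact ⟨hHi ▸ ⟨hzH, M.mem_star_image.mpr h.1⟩, hzF⟩
      · rintro z ⟨hzL, hzF⟩
        have hzL' : M.star z ∈ M.loops := by
          rw [← M.star_loops]; exact ⟨z, hzL, rfl⟩
        rw [← hHi] at hzL hzL'
        exact ⟨⟨hzL.1, hzF⟩, M.mem_star_image.mpr ⟨hzL'.1, hFst z hzF⟩⟩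
    · apply subset_antisymm
      · rintro z ⟨hz1, hzF⟩
        have hz : z ∈ M.cx H := M.cx_mono Set.inter_subset_left hz1
        rw [hHc] at hz
        exact ⟨hz, hzF⟩
      · intro z hz
        exact ⟨M.subset_cx _ hz, hz.2⟩
  tfae_finish
end

section
/- Let R = (G,Φ,Φ⁺) be a faithful signed groupoid set and x, w, y, z morphisms with xw = yz (a commuting square). Then (x,w,y,z) is a square (i.e. x(Φ_w) = Φ_y) if and only if Φ_{x⁻¹} ∩ Φ_w = ∅, Φ_x ∩ Φ_y = ∅, Φ_z ∩ Φ_{y⁻¹} = ∅, and Φ_{z⁻¹} ∩ Φ_{w⁻¹} = ∅. -/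
open CategoryTheory

universe u v

/-- A signed groupoid set: a groupoid `G` acting on a family of definitely involuted
sets `R a` (`a ∈ Ob G`), with involution `neg`, positive parts `pos a`, and the action
commuting with the involution. -/
structure SGS (G : Type u) [Groupoid G] (R : G → Type v) where
  neg : ∀ {a : G}, R a → R a
  pos : ∀ a : G, Set (R a)
  act : ∀ {a b : G}, (b ⟶ a) → R b → R a
  neg_neg : ∀ {a : G} (x : R a), neg (neg x) = x
  pos_iff : ∀ {a : G} (x : R a), x ∈ pos a ↔ neg x ∉ pos a
  act_id : ∀ {a : G} (x : R a), act (𝟙 a) x = x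
  act_comp : ∀ {a b c : G} (g : c ⟶ b) (f : b ⟶ a) (x : R c),
      act f (act g x) = act (g ≫ f) x
  act_neg : ∀ {a b : G} (f : b ⟶ a) (x : R b), act f (neg x) = neg (act f x)

/-- The morphisms of `G` with codomain `a`. -/
abbrev SHoms (G : Type u) [Groupoid G] (a : G) : Type _ := Σ b : G, (b ⟶ a)

namespace SGS

variable {G : Type u} [Groupoid G] {R : G → Type v} (S : SGS G R)

/-- The inversion set of a morphism `f : b ⟶ a`: positive roots at `a` sent to
negative roots at `b` by `f⁻¹`. -/
def Phi {a b : G} (f : b ⟶ a) : Set (R a) :=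
  {α | α ∈ S.pos a ∧ S.act (Groupoid.inv f) α ∉ S.pos b}

/-- The inversion set of an element of `SHoms G a`. -/
def PhiS {a : G} (g : SHoms G a) : Set (R a) := S.Phi g.2

/-- `S` is faithful if only identity morphisms have empty inversion set. -/
def Faithful : Prop :=
  ∀ ⦃a b : G⦄ (f : b ⟶ a), S.Phi f = ∅ → ∃ h : b = a, f = eqToHom h

/-- `j` is an upper bound of `F` in the weak order at `a`. -/
def IsUB {a : G} (F : Set (SHoms G a)) (j : SHoms G a) : Prop :=
  ∀ g ∈ F, S.PhiS g ⊆ S.PhiS j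

/-- `j` is a least upper bound of `F` in the weak order at `a`. -/
def IsLUBw {a : G} (F : Set (SHoms G a)) (j : SHoms G a) : Prop :=
  S.IsUB F j ∧ ∀ k : SHoms G a, S.IsUB F k → S.PhiS j ⊆ S.PhiS k

/-- `S` is complete: the weak order at every object is a complete lattice
(equivalently, every family of morphisms with a common codomain has a join). -/
def Complete : Prop := ∀ (a : G) (F : Set (SHoms G a)), ∃ j : SHoms G a, S.IsLUBw F j

/-- `S` is finite: finitely many objects, morphisms and roots. -/
def FiniteSGS (_S : SGS G R) : Prop :=
  Finite G ∧ (∀ a b : G, Finite (a ⟶ b)) ∧ ∀ a : G, Finite (R a)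

/-- A square `(x, w, y, z)`: a commuting square `xw = yz` with `x(Φ_w) = Φ_y`. -/
def Square {a b c d : G} (x : b ⟶ d) (w : a ⟶ b) (y : c ⟶ d) (z : a ⟶ c) : Prop :=
  w ≫ x = z ≫ y ∧ S.act x '' S.Phi w = S.Phi y

/-- The positive real roots at `a`: the union of all inversion sets at `a`. -/
def posRe (a : G) : Set (R a) := ⋃ g : SHoms G a, S.PhiS g

/-- An atomic morphism: an atom of the weak order at its codomain. -/
def Atomic {a : G} (g : SHoms G a) : Prop :=
  S.PhiS g ≠ ∅ ∧ ∀ h : SHoms G a, S.PhiS h ⊆ S.PhiS g →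
    S.PhiS h = ∅ ∨ S.PhiS h = S.PhiS g

/-- A simple morphism: one whose inversion set is a singleton. -/
def Simple {a b : G} (f : b ⟶ a) : Prop := ∃ α : R a, S.Phi f = {α}

/-- Interval finiteness: every interval `[1ₐ, g]` of a weak order is finite. -/
def IntervalFinite : Prop :=
  ∀ (a : G) (g : SHoms G a), {h : SHoms G a | S.PhiS h ⊆ S.PhiS g}.Finite

/-- Preprincipal: interval finite, and the inversion set of an atomic morphism is
contained in, or disjoint from, any other inversion set at the same object. -/
def Preprincipal : Prop :=
  S.IntervalFinite ∧ ∀ (a : G) (s g : SHoms G a), S.Atomic s →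
    S.PhiS s ⊆ S.PhiS g ∨ S.PhiS s ∩ S.PhiS g = ∅

/-- Antipodal: the weak order at each object has a maximum element. -/
def Antipodal : Prop :=
  ∀ a : G, ∃ ω : SHoms G a, ∀ g : SHoms G a, S.PhiS g ⊆ S.PhiS ω

end SGS



namespace SGS

variable {G : Type u} [Groupoid G] {R : G → Type v} (S : SGS G R)

lemma act_inv_act' {a b : G} (f : b ⟶ a) (v : R b) :
    S.act (Groupoid.inv f) (S.act f v) = v := by
  rw [S.act_comp, Groupoid.comp_inv, S.act_id]

lemma act_act_inv' {a b : G} (f : b ⟶ a) (v : R a) :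
    S.act f (S.act (Groupoid.inv f) v) = v := by
  rw [S.act_comp, Groupoid.inv_comp, S.act_id]

lemma not_pos' {a : G} (v : R a) : v ∉ S.pos a ↔ S.neg v ∈ S.pos a := by
  have h := S.pos_iff (S.neg v)
  rw [S.neg_neg] at h
  exact h.symm

lemma mem_Phi' {a b : G} (f : b ⟶ a) (α : R a) :
    α ∈ S.Phi f ↔ α ∈ S.pos a ∧ S.act (Groupoid.inv f) α ∉ S.pos b := Iff.rfl

lemma ginv_inv {a b : G} (f : b ⟶ a) : Groupoid.inv (Groupoid.inv f) = f := by
  simp [Groupoid.inv_eq_inv]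

lemma ginv_comp {a b c : G} (g : c ⟶ b) (f : b ⟶ a) :
    Groupoid.inv (g ≫ f) = Groupoid.inv f ≫ Groupoid.inv g := by
  simp [Groupoid.inv_eq_inv]

end SGS

/-- a commuting square `xw = yz` is a square (i.e. `x(Φ_w) = Φ_y`) iff
`Φ_{x⁻¹} ∩ Φ_w = ∅`, `Φ_x ∩ Φ_y = ∅`, `Φ_z ∩ Φ_{y⁻¹} = ∅` and `Φ_{z⁻¹} ∩ Φ_{w⁻¹} = ∅`. -/
theorem stmt_8 {G : Type u} [Groupoid G] {R : G → Type v} (S : SGS G R)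
    (hfa : S.Faithful) {a b c d : G}
    (x : b ⟶ d) (w : a ⟶ b) (y : c ⟶ d) (z : a ⟶ c)
    (hcomm : w ≫ x = z ≫ y) :
    S.act x '' S.Phi w = S.Phi y ↔
      (S.Phi (Groupoid.inv x) ∩ S.Phi w = ∅ ∧
       S.Phi x ∩ S.Phi y = ∅ ∧
       S.Phi z ∩ S.Phi (Groupoid.inv y) = ∅ ∧
       S.Phi (Groupoid.inv z) ∩ S.Phi (Groupoid.inv w) = ∅) := by
  constructor
  · intro h
    refine ⟨?_, ?_, ?_, ?_⟩
    · ext β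
      simp only [Set.mem_inter_iff, Set.mem_empty_iff_false, iff_false, not_and]
      rintro ⟨hβp, hβn⟩ hβw
      rw [SGS.ginv_inv] at hβn
      have : S.act x β ∈ S.Phi y := h ▸ ⟨β, hβw, rfl⟩
      exact hβn this.1
    · ext α
      simp only [Set.mem_inter_iff, Set.mem_empty_iff_false, iff_false, not_and]
      rintro ⟨hαp, hαn⟩ hαy
      obtain ⟨β, hβw, hβ⟩ := h ▸ hαy
      rw [← hβ, S.act_inv_act'] at hαn
      exact hαn hβw.1
    · ext γ
      simp only [Set.mem_inter_iff, Set.mem_empty_iff_false, iff_false, not_and]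
      rintro ⟨hγp, hγn⟩ ⟨_, hyγ⟩
      rw [SGS.ginv_inv] at hyγ
      -- neg (act y γ) ∈ Φ_y
      have h1 : S.neg (S.act y γ) ∈ S.Phi y := by
        refine ⟨(S.not_pos' _).1 hyγ, ?_⟩
        rw [S.act_neg, S.act_inv_act']
        exact (S.pos_iff γ).1 hγp
      obtain ⟨β, hβw, hβ⟩ := h ▸ h1
      -- β = act (inv x) (neg (act y γ)) = neg (act (y ≫ inv x) γ)
      have hβeq : β = S.neg (S.act (y ≫ Groupoid.inv x) γ) := by
        rw [← S.act_inv_act' x β, hβ, S.act_neg, S.act_comp]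
      have hw : w = z ≫ y ≫ Groupoid.inv x := by
        rw [← Category.assoc, ← hcomm, Category.assoc, Groupoid.comp_inv, Category.comp_id]
      have hkey : y ≫ Groupoid.inv x = Groupoid.inv z ≫ w := by
        rw [hw, ← Category.assoc, Groupoid.inv_comp, Category.id_comp]
      have : S.act (Groupoid.inv w) β = S.neg (S.act (Groupoid.inv z) γ) := by
        rw [hβeq, S.act_neg, S.act_comp, hkey]
        rw [Category.assoc, Groupoid.comp_inv, Category.comp_id]
      have h2 := hβw.2
      rw [this, ← S.not_pos'] at h2
      exact h2 hγn
    · ext δ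
      simp only [Set.mem_inter_iff, Set.mem_empty_iff_false, iff_false, not_and]
      rintro ⟨hδp, hδz⟩ ⟨_, hδw⟩
      rw [SGS.ginv_inv] at hδz hδw
      have hβ : S.neg (S.act w δ) ∈ S.Phi w := by
        refine ⟨(S.not_pos' _).1 hδw, ?_⟩
        rw [S.act_neg, S.act_inv_act']
        exact (S.pos_iff δ).1 hδp
      have h1 : S.act x (S.neg (S.act w δ)) ∈ S.Phi y := h ▸ ⟨_, hβ, rfl⟩
      have h2 := h1.2
      rw [S.act_neg, S.act_comp, hcomm, ← S.act_comp, S.act_neg, S.act_inv_act',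
        ← S.not_pos'] at h2
      exact h2 hδz
  · rintro ⟨h1, h2, h3, h4⟩
    ext α
    constructor
    · rintro ⟨β, hβw, rfl⟩
      have hαp : S.act x β ∈ S.pos d := by
        by_contra hn
        have : β ∈ S.Phi (Groupoid.inv x) ∩ S.Phi w := by
          refine ⟨⟨hβw.1, ?_⟩, hβw⟩
          rwa [SGS.ginv_inv]
        rw [h1] at this
        exact this
      refine ⟨hαp, ?_⟩
      intro hγ
      -- γ = act (inv y) (act x β) = act (x ≫ inv y) β
      -- δ = act (inv w) β ∉ pos; act z δ = act (inv w ≫ z) β = γ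
      have hz : z = w ≫ x ≫ Groupoid.inv y := by
        rw [← Category.assoc, hcomm, Category.assoc, Groupoid.comp_inv, Category.comp_id]
      have hkey : Groupoid.inv w ≫ z = x ≫ Groupoid.inv y := by
        rw [hz, ← Category.assoc, Groupoid.inv_comp, Category.id_comp]
      set δ := S.act (Groupoid.inv w) β with hδ
      have hzδ : S.act z δ = S.act (Groupoid.inv y) (S.act x β) := by
        rw [hδ, S.act_comp, hkey, ← S.act_comp]
      have : S.neg δ ∈ S.Phi (Groupoid.inv z) ∩ S.Phi (Groupoid.inv w) := by
        refine ⟨⟨(S.not_pos' _).1 hβw.2, ?_⟩, ⟨(S.not_pos' _).1 hβw.2, ?_⟩⟩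
        · rw [SGS.ginv_inv, S.act_neg, hzδ, ← S.not_pos', not_not]
          exact hγ
        · rw [SGS.ginv_inv, S.act_neg, S.act_act_inv', ← S.not_pos', not_not]
          exact hβw.1
      rw [h4] at this
      exact this
    · intro hαy
      refine ⟨S.act (Groupoid.inv x) α, ⟨?_, ?_⟩, S.act_act_inv' x α⟩
      · by_contra hn
        have : α ∈ S.Phi x ∩ S.Phi y := ⟨⟨hαy.1, hn⟩, hαy⟩
        rw [h2] at this
        exact this
      · intro hδ
        -- δ = act (inv z) γ where γ = act (inv y) α ∉ pos
        set γ := S.act (Groupoid.inv y) α with hγ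
        have hkey : Groupoid.inv x ≫ Groupoid.inv w = Groupoid.inv y ≫ Groupoid.inv z := by
          rw [← SGS.ginv_comp, ← SGS.ginv_comp, hcomm]
        have hδe : S.act (Groupoid.inv w) (S.act (Groupoid.inv x) α)
            = S.act (Groupoid.inv z) γ := by
          rw [S.act_comp, hkey, ← S.act_comp]
        rw [hδe] at hδ
        have : S.neg γ ∈ S.Phi z ∩ S.Phi (Groupoid.inv y) := by
          refine ⟨⟨(S.not_pos' _).1 hαy.2, ?_⟩, ⟨(S.not_pos' _).1 hαy.2, ?_⟩⟩
          · rw [S.act_neg, ← S.not_pos', not_not]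
            exact hδ
          · rw [SGS.ginv_inv, S.act_neg, hγ, S.act_act_inv', ← S.not_pos', not_not]
            exact hαy.1
        rw [h3] at this
        exact this
end

section
/- Let R be a faithful, complete signed groupoid set and let (x, wᵢ, yᵢ, zᵢ), i ∈ I, be a family of squares all with the same morphism x : b → d. Then there exists a square (x, w, y, z) with w = ⋁ᵢ wᵢ and y = ⋁ᵢ yᵢ (joins in the weak orders at b and d respectively). -/
open CategoryTheory

universe u v

section Helpers

open CategoryTheory

variable {G : Type u} [Groupoid G] {R : G → Type v} (S : SGS G R)

lemma SGS.act_act_inv {a b : G} (f : b ⟶ a) (α : R a) :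
    S.act f (S.act (Groupoid.inv f) α) = α := by
  rw [S.act_comp, Groupoid.inv_comp, S.act_id]

lemma SGS.act_inv_act {a b : G} (f : b ⟶ a) (β : R b) :
    S.act (Groupoid.inv f) (S.act f β) = β := by
  rw [S.act_comp, Groupoid.comp_inv, S.act_id]

lemma SGS.neg_mem_pos {a : G} (α : R a) : S.neg α ∈ S.pos a ↔ α ∉ S.pos a := by
  rw [S.pos_iff (S.neg α), S.neg_neg]

lemma SGS.mem_phi {a b : G} (f : b ⟶ a) (α : R a) :
    α ∈ S.Phi f ↔ α ∈ S.pos a ∧ S.act (Groupoid.inv f) α ∉ S.pos b := Iff.rfl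

lemma SGS.mem_phi_inv {a b : G} (f : b ⟶ a) (β : R b) :
    β ∈ S.Phi (Groupoid.inv f) ↔ β ∈ S.pos b ∧ S.act f β ∉ S.pos a := by
  rw [S.mem_phi]
  have h : Groupoid.inv (Groupoid.inv f) = f := by simp [Groupoid.inv_eq_inv]
  rw [h]

lemma SGS.mem_phi_comp {a b e : G} (w : e ⟶ b) (f : b ⟶ a) (α : R a) :
    α ∈ S.Phi (w ≫ f) ↔
      α ∈ S.pos a ∧ S.act (Groupoid.inv w) (S.act (Groupoid.inv f) α) ∉ S.pos e := by
  rw [S.mem_phi]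
  have h : Groupoid.inv (w ≫ f) = Groupoid.inv f ≫ Groupoid.inv w := by
    simp [Groupoid.inv_eq_inv]
  rw [h, ← S.act_comp]

lemma SGS.phi_subset_pos {a b : G} (f : b ⟶ a) : S.Phi f ⊆ S.pos a := fun _ h => h.1

/-- Image of an inversion set is disjoint from the inversion set of the outer arrow. -/
lemma SGS.image_phi_disjoint {a b e : G} (w : e ⟶ b) (f : b ⟶ a) (α : R a)
    (hα : α ∈ S.act f '' S.Phi w) : α ∉ S.Phi f := by
  obtain ⟨β, hβ, rfl⟩ := hα
  intro hc
  rw [S.mem_phi, S.act_inv_act] at hc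
  exact hc.2 hβ.1

/-- Composition lemma in the "orthogonal" case. -/
lemma SGS.phi_comp_of_disjoint {a b e : G} (w : e ⟶ b) (f : b ⟶ a)
    (hpos : ∀ β ∈ S.Phi w, S.act f β ∈ S.pos a) :
    S.Phi (w ≫ f) = S.Phi f ∪ S.act f '' S.Phi w := by
  ext α
  rw [S.mem_phi_comp]
  constructor
  · rintro ⟨hα, hne⟩
    by_cases hβ : S.act (Groupoid.inv f) α ∈ S.pos b
    · exact Or.inr ⟨S.act (Groupoid.inv f) α, ⟨hβ, hne⟩, S.act_act_inv f α⟩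
    · exact Or.inl ⟨hα, hβ⟩
  · rintro (⟨hα, hβ⟩ | hα)
    · refine ⟨hα, fun hc => ?_⟩
      -- β := act (inv f) α is negative; show act (inv w) β positive leads to contradiction
      set β := S.act (Groupoid.inv f) α with hβdef
      have hnβ : S.neg β ∈ S.pos b := (S.neg_mem_pos β).2 hβ
      have hnw : S.act (Groupoid.inv w) (S.neg β) ∉ S.pos e := by
        rw [S.act_neg]
        rw [S.neg_mem_pos]
        simpa using hc
      have hmem : S.neg β ∈ S.Phi w := ⟨hnβ, hnw⟩
      have := hpos _ hmem
      rw [S.act_neg, S.act_act_inv] at this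
      exact ((S.neg_mem_pos α).1 this) hα
    · obtain ⟨β, hβ, rfl⟩ := hα
      refine ⟨hpos _ hβ, ?_⟩
      rw [S.act_inv_act]
      exact hβ.2

/-- Composition ("quotient") lemma in the dominated case. -/
lemma SGS.phi_comp_of_le {a c e : G} (m : e ⟶ c) (h : c ⟶ a)
    (hle : S.Phi (Groupoid.inv h) ⊆ S.Phi m) (α : R a) :
    α ∈ S.Phi (m ≫ h) ↔
      α ∈ S.pos a ∧ α ∉ S.Phi h ∧ S.act (Groupoid.inv h) α ∈ S.Phi m := by
  rw [S.mem_phi_comp]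
  constructor
  · rintro ⟨hα, hne⟩
    by_cases hβ : S.act (Groupoid.inv h) α ∈ S.pos c
    · exact ⟨hα, fun hc => hc.2 hβ, hβ, hne⟩
    · exfalso
      set β := S.act (Groupoid.inv h) α with hβdef
      have hnβ : S.neg β ∈ S.pos c := (S.neg_mem_pos β).2 hβ
      have hmem : S.neg β ∈ S.Phi (Groupoid.inv h) := by
        rw [S.mem_phi_inv]
        refine ⟨hnβ, ?_⟩
        rw [S.act_neg, S.act_act_inv, S.neg_mem_pos]
        simpa using hα
      have hβm : S.neg β ∈ S.Phi m := hle hmem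
      have : S.act (Groupoid.inv m) (S.neg β) ∉ S.pos e := hβm.2
      rw [S.act_neg, S.neg_mem_pos] at this
      simp only [not_not] at this
      exact hne this
  · rintro ⟨hα, -, hβm⟩
    exact ⟨hα, ((S.mem_phi m _).1 hβm).2⟩

/-- Join Orthogonality Property. -/
lemma SGS.jop (hcomp : S.Complete) {a : G} (F : Set (SHoms G a)) (j : SHoms G a)
    (hj : S.IsLUBw F j) {c : G} (h : c ⟶ a)
    (hdisj : ∀ g ∈ F, ∀ α ∈ S.PhiS g, α ∉ S.Phi h) :
    ∀ α ∈ S.PhiS j, α ∉ S.Phi h := by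
  classical
  -- push everything to c by composing with inv h
  set F' : Set (SHoms G c) :=
    insert ⟨a, Groupoid.inv h⟩ {p | ∃ g ∈ F, p = ⟨g.1, g.2 ≫ Groupoid.inv h⟩} with hF'
  obtain ⟨m, hm⟩ := hcomp c F'
  -- inversion set of inv h is inside that of m
  have hinvh : S.Phi (Groupoid.inv h) ⊆ S.PhiS m :=
    hm.1 ⟨a, Groupoid.inv h⟩ (Set.mem_insert _ _)
  -- the candidate upper bound n := m ≫ h
  have hn := S.phi_comp_of_le m.2 h hinvh
  -- n is an upper bound of F
  have hub : S.IsUB F ⟨m.1, m.2 ≫ h⟩ := by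
    intro g hg γ hγ
    have hγpos : γ ∈ S.pos a := hγ.1
    have hγnh : γ ∉ S.Phi h := hdisj g hg γ hγ
    have hβ : S.act (Groupoid.inv h) γ ∈ S.Phi (g.2 ≫ Groupoid.inv h) := by
      have hposc : ∀ β ∈ S.Phi g.2, S.act (Groupoid.inv h) β ∈ S.pos c := by
        intro β hβ
        by_contra hneg
        exact hdisj g hg β hβ ⟨hβ.1, hneg⟩
      rw [S.phi_comp_of_disjoint g.2 (Groupoid.inv h) hposc]
      exact Or.inr ⟨γ, hγ, rfl⟩
    have hβm : S.act (Groupoid.inv h) γ ∈ S.PhiS m :=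
      hm.1 ⟨g.1, g.2 ≫ Groupoid.inv h⟩ (Set.mem_insert_of_mem _ ⟨g, hg, rfl⟩) hβ
    exact (hn γ).2 ⟨hγpos, hγnh, hβm⟩
  intro α hα
  have := hj.2 _ hub hα
  exact ((hn α).1 this).2.1

end Helpers

/-- in a faithful complete signed groupoid set, a family of squares
`(x, wᵢ, yᵢ, zᵢ)` with common `x : b ⟶ d` admits a square `(x, w, y, z)` where
`w = ⋁ᵢ wᵢ` and `y = ⋁ᵢ yᵢ` in the weak orders at `b` and `d`. -/
theorem stmt_10 {G : Type u} [Groupoid G] {R : G → Type v} (S : SGS G R)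
    (hfa : S.Faithful) (hcomp : S.Complete)
    {b d : G} (x : b ⟶ d) {I : Type*} (a c : I → G)
    (w : ∀ i : I, a i ⟶ b) (y : ∀ i : I, c i ⟶ d) (z : ∀ i : I, a i ⟶ c i)
    (hsq : ∀ i : I, S.Square x (w i) (y i) (z i)) :
    ∃ (a' c' : G) (w' : a' ⟶ b) (y' : c' ⟶ d) (z' : a' ⟶ c'),
      S.Square x w' y' z' ∧
      S.IsLUBw (Set.range fun i : I => (⟨a i, w i⟩ : SHoms G b)) ⟨a', w'⟩ ∧
      S.IsLUBw (Set.range fun i : I => (⟨c i, y i⟩ : SHoms G d)) ⟨c', y'⟩ := by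
  classical
  obtain ⟨w', hw'⟩ := hcomp b (Set.range fun i : I => (⟨a i, w i⟩ : SHoms G b))
  obtain ⟨y', hy'⟩ := hcomp d (Set.range fun i : I => (⟨c i, y i⟩ : SHoms G d))
  -- basic facts about the squares
  have hphi : ∀ i, S.act x '' S.Phi (w i) = S.Phi (y i) := fun i => (hsq i).2
  have hyx : ∀ i, ∀ α ∈ S.Phi (y i), α ∉ S.Phi x := by
    intro i α hα
    rw [← hphi i] at hα
    exact S.image_phi_disjoint _ _ _ hα
  have hwx : ∀ i, ∀ β ∈ S.Phi (w i), β ∉ S.Phi (Groupoid.inv x) := by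
    intro i β hβ hc
    rw [S.mem_phi_inv] at hc
    have : S.act x β ∈ S.Phi (y i) := by rw [← hphi i]; exact ⟨β, hβ, rfl⟩
    exact hc.2 this.1
  -- JOP applications
  have hW : ∀ β ∈ S.PhiS w', β ∉ S.Phi (Groupoid.inv x) := by
    refine S.jop hcomp _ w' hw' (Groupoid.inv x) ?_
    rintro g ⟨i, rfl⟩ β hβ
    exact hwx i β hβ
  have hY : ∀ α ∈ S.PhiS y', α ∉ S.Phi x := by
    refine S.jop hcomp _ y' hy' x ?_
    rintro g ⟨i, rfl⟩ α hα
    exact hyx i α hα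
  -- the image A of Phi w' under x lands in positives
  have hApos : ∀ β ∈ S.Phi w'.2, S.act x β ∈ S.pos d := by
    intro β hβ
    by_contra hneg
    exact hW β hβ (by rw [S.mem_phi_inv]; exact ⟨hβ.1, hneg⟩)
  have hv : S.Phi (w'.2 ≫ x) = S.Phi x ∪ S.act x '' S.Phi w'.2 :=
    S.phi_comp_of_disjoint w'.2 x hApos
  -- Phi y' ⊆ A
  have hYA : S.Phi y'.2 ⊆ S.act x '' S.Phi w'.2 := by
    have hub : S.IsUB (Set.range fun i : I => (⟨c i, y i⟩ : SHoms G d)) ⟨w'.1, w'.2 ≫ x⟩ := by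
      rintro g ⟨i, rfl⟩ α hα
      have hα' : α ∈ S.Phi (y i) := hα
      rw [← hphi i] at hα'
      obtain ⟨β, hβ, rfl⟩ := hα'
      have hβ' : β ∈ S.Phi w'.2 := hw'.1 ⟨a i, w i⟩ ⟨i, rfl⟩ hβ
      show S.act x β ∈ S.Phi (w'.2 ≫ x)
      rw [hv]
      exact Or.inr ⟨β, hβ', rfl⟩
    intro α hα
    have hαv : α ∈ S.Phi (w'.2 ≫ x) := hy'.2 _ hub hα
    rw [hv] at hαv
    rcases hαv with h1 | h2
    · exact absurd h1 (hY α hα)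
    · exact h2
  -- Phi w' ⊆ B := act (inv x) '' Phi y'
  have hBpos : ∀ γ ∈ S.Phi y'.2, S.act (Groupoid.inv x) γ ∈ S.pos b := by
    intro γ hγ
    by_contra hneg
    exact hY γ hγ ⟨hγ.1, hneg⟩
  have hk : S.Phi (y'.2 ≫ Groupoid.inv x)
      = S.Phi (Groupoid.inv x) ∪ S.act (Groupoid.inv x) '' S.Phi y'.2 :=
    S.phi_comp_of_disjoint y'.2 (Groupoid.inv x) hBpos
  have hWB : S.Phi w'.2 ⊆ S.act (Groupoid.inv x) '' S.Phi y'.2 := by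
    have hub : S.IsUB (Set.range fun i : I => (⟨a i, w i⟩ : SHoms G b))
        ⟨y'.1, y'.2 ≫ Groupoid.inv x⟩ := by
      rintro g ⟨i, rfl⟩ β hβ
      have : S.act x β ∈ S.Phi (y i) := by rw [← hphi i]; exact ⟨β, hβ, rfl⟩
      have hmem : S.act x β ∈ S.Phi y'.2 := hy'.1 ⟨c i, y i⟩ ⟨i, rfl⟩ this
      show β ∈ S.Phi (y'.2 ≫ Groupoid.inv x)
      rw [hk]
      refine Or.inr ⟨S.act x β, hmem, S.act_inv_act x β⟩
    intro β hβ
    have hβk : β ∈ S.Phi (y'.2 ≫ Groupoid.inv x) := hw'.2 _ hub hβ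
    rw [hk] at hβk
    rcases hβk with h1 | h2
    · exact absurd h1 (hW β hβ)
    · exact h2
  -- conclude Phi y' = act x '' Phi w'
  have hkey : S.act x '' S.Phi w'.2 = S.Phi y'.2 := by
    apply Set.Subset.antisymm
    · rintro α ⟨β, hβ, rfl⟩
      obtain ⟨γ, hγ, hγeq⟩ := hWB hβ
      have : S.act x β = γ := by
        have := congrArg (S.act x) hγeq
        rw [S.act_act_inv] at this
        exact this.symm
      rw [this]; exact hγ
    · intro α hα
      exact hYA hα
  refine ⟨w'.1, y'.1, w'.2, y'.2, w'.2 ≫ x ≫ Groupoid.inv y'.2, ⟨?_, hkey⟩, ?_, ?_⟩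
  · simp [Groupoid.inv_comp]
  · exact hw'
  · exact hy'
end

section
/- Let R be a faithful, interval-finite signed groupoid set. Then R is atomically generated: every non-identity morphism of G is a composite of atomic morphisms and their inverses. -/
open CategoryTheory

universe u v

/-- Morphisms expressible as composites of atomic morphisms and their inverses
(together with the identities). -/
inductive GenAtom {G : Type u} [Groupoid G] {R : G → Type v} (S : SGS G R) :
    ∀ {a b : G}, (b ⟶ a) → Prop
  | id (a : G) : GenAtom S (𝟙 a)
  | atom {a b : G} (f : b ⟶ a) : S.Atomic ⟨b, f⟩ → GenAtom S f
  | inv {a b : G} (f : b ⟶ a) : GenAtom S f → GenAtom S (Groupoid.inv f)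
  | comp {a b c : G} (g : c ⟶ b) (f : b ⟶ a) :
      GenAtom S g → GenAtom S f → GenAtom S (g ≫ f)

namespace SGS

variable {G : Type u} [Groupoid G] {R : G → Type v} (S : SGS G R)

lemma phi_id (a : G) : S.Phi (𝟙 a) = ∅ := by
  ext α
  simp only [Phi, Set.mem_setOf_eq, Set.mem_empty_iff_false, iff_false, not_and]
  intro h1 h2
  apply h2
  have h3 : Groupoid.inv (𝟙 a) = 𝟙 a := by simp [Groupoid.inv_eq_inv]
  rwa [h3, S.act_id]

lemma act_inv_comp {a c d : G} (r : c ⟶ a) (h : d ⟶ c) (α : R a) :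
    S.act (Groupoid.inv (h ≫ r)) α = S.act (Groupoid.inv h) (S.act (Groupoid.inv r) α) := by
  rw [S.act_comp]
  congr 1
  simp [Groupoid.inv_eq_inv]

lemma act_r_act_inv_r {a c : G} (r : c ⟶ a) (α : R a) :
    S.act r (S.act (Groupoid.inv r) α) = α := by
  rw [S.act_comp, Groupoid.inv_comp, S.act_id]

lemma act_inv_comp_inv {a b c : G} (f : b ⟶ a) (r : c ⟶ a) (β : R c) :
    S.act (Groupoid.inv (f ≫ Groupoid.inv r)) β = S.act (Groupoid.inv f) (S.act r β) := by
  rw [S.act_comp]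
  congr 1
  simp [Groupoid.inv_eq_inv]

/-- Key step (a): if `Φ_h ⊆ Φ_{f ≫ r⁻¹}` then `Φ_{h ≫ r} ⊆ Φ_f` (given `Φ_r ⊆ Φ_f`). -/
lemma phi_comp_subset {a b c d : G} (f : b ⟶ a) (r : c ⟶ a) (h : d ⟶ c)
    (hr : S.Phi r ⊆ S.Phi f) (hh : S.Phi h ⊆ S.Phi (f ≫ Groupoid.inv r)) :
    S.Phi (h ≫ r) ⊆ S.Phi f := by
  rintro α ⟨hpos, hneg⟩
  rw [S.act_inv_comp] at hneg
  set β := S.act (Groupoid.inv r) α with hβ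
  by_cases hc : β ∈ S.pos c
  · have hβh : β ∈ S.Phi h := ⟨hc, hneg⟩
    have := hh hβh
    obtain ⟨-, h2⟩ := this
    rw [S.act_inv_comp_inv, hβ, S.act_r_act_inv_r] at h2
    exact ⟨hpos, h2⟩
  · exact hr ⟨hpos, hc⟩

/-- Key step (b): under the same hypotheses, `Φ_r ⊆ Φ_{h ≫ r}`. -/
lemma phi_r_subset {a b c d : G} (f : b ⟶ a) (r : c ⟶ a) (h : d ⟶ c)
    (hr : S.Phi r ⊆ S.Phi f) (hh : S.Phi h ⊆ S.Phi (f ≫ Groupoid.inv r)) :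
    S.Phi r ⊆ S.Phi (h ≫ r) := by
  rintro α ⟨hpos, hneg⟩
  refine ⟨hpos, ?_⟩
  rw [S.act_inv_comp]
  set β := S.act (Groupoid.inv r) α with hβ
  intro hd
  -- `neg β` is positive and inverted by `h`
  have hnb : S.neg β ∈ S.pos c := by
    rw [S.pos_iff, S.neg_neg]; exact hneg
  have hnbh : S.neg β ∈ S.Phi h := by
    refine ⟨hnb, ?_⟩
    rw [S.act_neg, ← S.pos_iff]
    exact hd
  obtain ⟨-, h2⟩ := hh hnbh
  rw [S.act_inv_comp_inv, S.act_neg, S.act_neg, hβ, S.act_r_act_inv_r, ← S.pos_iff] at h2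
  exact (hr ⟨hpos, hneg⟩).2 h2

end SGS

/-- a faithful, interval-finite signed groupoid set is atomically
generated: every morphism is a composite of atomic morphisms and their inverses. -/
theorem stmt_14 {G : Type u} [Groupoid G] {R : G → Type v} (S : SGS G R)
    (hfa : S.Faithful) (hif : S.IntervalFinite) :
    ∀ {a b : G} (f : b ⟶ a), GenAtom S f := by
  suffices H : ∀ (n : ℕ) {a b : G} (f : b ⟶ a),
      {h : SHoms G a | S.PhiS h ⊆ S.Phi f}.ncard ≤ n → GenAtom S f by
    intro a b f
    exact H _ f le_rfl
  intro n
  induction n with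
  | zero =>
    intro a b f hcard
    exfalso
    have hfin : {h : SHoms G a | S.PhiS h ⊆ S.Phi f}.Finite := hif a ⟨b, f⟩
    have hne : (⟨a, 𝟙 a⟩ : SHoms G a) ∈ {h : SHoms G a | S.PhiS h ⊆ S.Phi f} := by
      show S.Phi (𝟙 a) ⊆ S.Phi f
      rw [S.phi_id]
      exact Set.empty_subset _
    have : 0 < {h : SHoms G a | S.PhiS h ⊆ S.Phi f}.ncard :=
      (Set.ncard_pos hfin).2 ⟨_, hne⟩
    omega
  | succ n ih =>
    intro a b f hcard
    by_cases hempty : S.Phi f = ∅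
    · obtain ⟨heq, hf⟩ := hfa f hempty
      subst heq
      simp only [eqToHom_refl] at hf
      rw [hf]
      exact GenAtom.id b
    · -- find an atom below `f`
      have hfin : {h : SHoms G a | S.PhiS h ⊆ S.Phi f}.Finite := hif a ⟨b, f⟩
      have hT'fin : {h : SHoms G a | S.PhiS h ⊆ S.Phi f ∧ S.PhiS h ≠ ∅}.Finite :=
        hfin.subset fun x hx => hx.1
      have hT'ne : {h : SHoms G a | S.PhiS h ⊆ S.Phi f ∧ S.PhiS h ≠ ∅}.Nonempty :=
        ⟨⟨b, f⟩, subset_rfl, hempty⟩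
      obtain ⟨⟨c, r⟩, hrmem, hrmin⟩ : ∃ x ∈ {h : SHoms G a | S.PhiS h ⊆ S.Phi f ∧ S.PhiS h ≠ ∅},
          ∀ x' ∈ {h : SHoms G a | S.PhiS h ⊆ S.Phi f ∧ S.PhiS h ≠ ∅},
            S.PhiS x' ≤ S.PhiS x → S.PhiS x = S.PhiS x' := by
        obtain ⟨i, hi⟩ := Set.Finite.exists_minimalFor S.PhiS _ hT'fin hT'ne
        exact ⟨i, hi.prop, fun j hj hle => le_antisymm (hi.le_of_le hj hle) hle⟩
      have hAtom : S.Atomic ⟨c, r⟩ := by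
        refine ⟨hrmem.2, fun h hsub => ?_⟩
        by_cases h0 : S.PhiS h = ∅
        · exact Or.inl h0
        · exact Or.inr (hrmin h ⟨hsub.trans hrmem.1, h0⟩ hsub).symm
      have hr : S.Phi r ⊆ S.Phi f := hrmem.1
      have hrne : S.Phi r ≠ ∅ := hrmem.2
      set g : b ⟶ c := f ≫ Groupoid.inv r with hg
      -- the interval at `g` is strictly smaller
      have hcard' : {h : SHoms G c | S.PhiS h ⊆ S.Phi g}.ncard ≤ n := by
        set ψ : SHoms G c → SHoms G a := fun h => ⟨h.1, h.2 ≫ r⟩ with hψ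
        have hinj : Function.Injective ψ := by
          rintro ⟨d, h⟩ ⟨d', h'⟩ heq
          obtain ⟨rfl, heq2⟩ := Sigma.mk.inj_iff.1 heq
          have : h ≫ r = h' ≫ r := eq_of_heq heq2
          rw [cancel_mono r] at this
          rw [this]
        have himsub : ψ '' {h : SHoms G c | S.PhiS h ⊆ S.Phi g} ⊆
            {h : SHoms G a | S.PhiS h ⊆ S.Phi f} := by
          rintro x ⟨⟨d, h⟩, hmem, rfl⟩
          exact S.phi_comp_subset f r h hr hmem
        have hid_nmem : (⟨a, 𝟙 a⟩ : SHoms G a) ∉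
            ψ '' {h : SHoms G c | S.PhiS h ⊆ S.Phi g} := by
          rintro ⟨⟨d, h⟩, hmem, heq⟩
          simp only [hψ] at heq
          obtain ⟨heq1, heq2⟩ := Sigma.mk.inj_iff.1 heq
          subst heq1
          have h1 : h ≫ r = 𝟙 d := eq_of_heq heq2
          have h2 : S.Phi r ⊆ S.Phi (h ≫ r) := S.phi_r_subset f r h hr hmem
          rw [h1, S.phi_id, Set.subset_empty_iff] at h2
          exact hrne h2
        have hid_mem : (⟨a, 𝟙 a⟩ : SHoms G a) ∈
            {h : SHoms G a | S.PhiS h ⊆ S.Phi f} := by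
          show S.Phi (𝟙 a) ⊆ S.Phi f
          rw [S.phi_id]
          exact Set.empty_subset _
        have hssub : ψ '' {h : SHoms G c | S.PhiS h ⊆ S.Phi g} ⊂
            {h : SHoms G a | S.PhiS h ⊆ S.Phi f} :=
          ⟨himsub, fun hsup => hid_nmem (hsup hid_mem)⟩
        have hlt : (ψ '' {h : SHoms G c | S.PhiS h ⊆ S.Phi g}).ncard <
            {h : SHoms G a | S.PhiS h ⊆ S.Phi f}.ncard :=
          Set.ncard_lt_ncard hssub hfin
        rw [Set.ncard_image_of_injective _ hinj] at hlt
        omega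
      have hGg : GenAtom S g := ih g hcard'
      have hGr : GenAtom S r := GenAtom.atom r hAtom
      have hfg : g ≫ r = f := by
        rw [hg, Category.assoc, Groupoid.inv_comp, Category.comp_id]
      exact hfg ▸ GenAtom.comp g r hGg hGr
end
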